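/- Decomposition of second-interval incidence among the time-1 unexposed. Assume Consistency, Exposure necessity, Treatment exchangeability, Positivity, and Exposure exchangeability. Then for each a ∈ {0,1}: E[ΔY2 · 1{E1 = 0} | A = a] = E[Y2[a,1]] · P(E2[a,0] = 1 and E1[a] = 0). -/

import Mathlib

open MeasureTheory ProbabilityTheory
open scoped ProbabilityTheory ENNReal

lemma siiu_aux
    {Ω : Type*} [MeasurableSpace Ω] (μ : Measure Ω) [IsProbabilityMeasure μ]
    (A E1 E2 DY2 E1a E2a Y2a : Ω → ℝ) (a : ℝ)
    (hAm : Measurable A) (hE1m : Measurable E1)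
    (hE1am : Measurable E1a) (hE2am : Measurable E2a) (hY2am : Measurable Y2a)
    (hE1r : ∀ ω, E1 ω = 0 ∨ E1 ω = 1) (hE2r : ∀ ω, E2 ω = 0 ∨ E2 ω = 1)
    (hY2ar : ∀ ω, Y2a ω = 0 ∨ Y2a ω = 1)
    (hconsE1a : ∀ᵐ ω ∂μ, A ω = a → E1 ω = E1a ω)
    (hconsE2a : ∀ᵐ ω ∂μ, A ω = a → E1 ω = 0 → E2 ω = E2a ω)
    (hconsY2a : ∀ᵐ ω ∂μ, A ω = a → E1 ω = 0 → E2 ω = 1 → DY2 ω = Y2a ω)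
    (hnecE2 : ∀ᵐ ω ∂μ, E2 ω = 0 → DY2 ω = 0)
    (hindep : IndepFun A (fun ω => (E1a ω, E2a ω, Y2a ω)) μ)
    (hposA : μ {ω | A ω = a} ≠ 0)
    (heeC : IndepFun E1a Y2a (μ[|{ω | E2a ω = 1}]))
    (heeU : IndepFun E2a Y2a μ) :
    (∫ ω in {ω | E1 ω = 0}, DY2 ω ∂(μ[|{ω | A ω = a}])) =
      (∫ ω, Y2a ω ∂μ) * (μ {ω | E2a ω = 1 ∧ E1a ω = 0}).toReal := by
  set sA : Set Ω := {ω | A ω = a} with hsA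
  have msA : MeasurableSet sA := hAm (measurableSet_singleton a)
  set Y : Set Ω := {ω | Y2a ω = 1} with hYdef
  set C : Set Ω := {ω | E2a ω = 1} with hCdef
  set F : Set Ω := {ω | E1a ω = 0} with hFdef
  have mY : MeasurableSet Y := hY2am (measurableSet_singleton 1)
  have mC : MeasurableSet C := hE2am (measurableSet_singleton 1)
  have mF : MeasurableSet F := hE1am (measurableSet_singleton 0)
  have mE10 : MeasurableSet {ω | E1 ω = 0} := hE1m (measurableSet_singleton 0)
  set S : Set Ω := Y ∩ (C ∩ F) with hSdef
  have mS : MeasurableSet S := mY.inter (mC.inter mF)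
  -- Step A : a.e. pointwise identity
  have hAE : ∀ᵐ ω ∂μ, (sA ∩ {ω | E1 ω = 0}).indicator DY2 ω
      = (sA ∩ S).indicator (1 : Ω → ℝ) ω := by
    filter_upwards [hconsE1a, hconsE2a, hconsY2a, hnecE2] with ω h1 h2 h3 h4
    by_cases hA : A ω = a
    · rcases hE1r ω with hE1 | hE1
      · have hE1a : E1a ω = 0 := (h1 hA) ▸ hE1
        have hE2eq : E2 ω = E2a ω := h2 hA hE1
        rcases hE2r ω with hE2 | hE2
        · have hDY : DY2 ω = 0 := h4 hE2
          have hCn : E2a ω ≠ 1 := by rw [← hE2eq, hE2]; norm_num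
          simp [Set.indicator_apply, hSdef, hCdef, hA, hE1, hDY, hCn, hsA]
        · have hDY : DY2 ω = Y2a ω := h3 hA hE1 hE2
          have hCy : E2a ω = 1 := hE2eq ▸ hE2
          rcases hY2ar ω with hYv | hYv
          · have hYn : Y2a ω ≠ 1 := by rw [hYv]; norm_num
            simp [Set.indicator_apply, hSdef, hYdef, hA, hE1, hDY, hYv, hYn, hsA]
          · simp [Set.indicator_apply, hSdef, hYdef, hCdef, hFdef, hA, hE1, hE1a, hDY,
              hYv, hCy, hsA]
      · have hE1n : E1 ω ≠ 0 := by rw [hE1]; norm_num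
        have hFn : E1a ω ≠ 0 := by rw [← h1 hA, hE1]; norm_num
        simp [Set.indicator_apply, hSdef, hFdef, hA, hE1n, hFn, hsA]
    · simp [Set.indicator_apply, hA, hsA]
  -- Step B : compute the LHS
  have hAne : μ sA ≠ ∞ := measure_ne_top _ _
  have hres : (μ[|sA]).restrict {ω | E1 ω = 0}
      = (μ sA)⁻¹ • μ.restrict (sA ∩ {ω | E1 ω = 0}) := by
    rw [ProbabilityTheory.cond, Measure.restrict_smul, Measure.restrict_restrict mE10,
      Set.inter_comm]
  have hLHS : (∫ ω in {ω | E1 ω = 0}, DY2 ω ∂(μ[|sA]))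
      = (μ sA).toReal⁻¹ * (μ (sA ∩ S)).toReal := by
    rw [show (∫ ω in {ω | E1 ω = 0}, DY2 ω ∂(μ[|sA]))
        = ∫ ω, DY2 ω ∂((μ[|sA]).restrict {ω | E1 ω = 0}) from rfl, hres,
      integral_smul_measure, ENNReal.toReal_inv, smul_eq_mul]
    congr 1
    calc (∫ ω in sA ∩ {ω | E1 ω = 0}, DY2 ω ∂μ)
        = ∫ ω, (sA ∩ {ω | E1 ω = 0}).indicator DY2 ω ∂μ := by
          rw [integral_indicator (msA.inter mE10)]
      _ = ∫ ω, (sA ∩ S).indicator (1 : Ω → ℝ) ω ∂μ := integral_congr_ae hAE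
      _ = (μ (sA ∩ S)).toReal := integral_indicator_one (msA.inter mS)
  -- Step C : treatment exchangeability
  have hCmul : μ (sA ∩ S) = μ sA * μ S := by
    have mT : MeasurableSet ({p : ℝ × ℝ × ℝ | p.2.2 = 1} ∩
        ({p | p.2.1 = 1} ∩ {p | p.1 = 0})) :=
      ((measurable_snd.comp measurable_snd) (measurableSet_singleton 1)).inter
        (((measurable_fst.comp measurable_snd) (measurableSet_singleton 1)).inter
          (measurable_fst (measurableSet_singleton 0)))
    have h := hindep.measure_inter_preimage_eq_mul {a} _ (measurableSet_singleton a) mT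
    have hpre : (fun ω => (E1a ω, E2a ω, Y2a ω)) ⁻¹' ({p : ℝ × ℝ × ℝ | p.2.2 = 1} ∩
        ({p | p.2.1 = 1} ∩ {p | p.1 = 0})) = S := by
      ext ω; simp [hSdef, hYdef, hCdef, hFdef]
    rw [hpre] at h
    exact h
  -- Step D : exposure exchangeability
  have hD : μ S = μ Y * μ (C ∩ F) := by
    by_cases hc : μ C = 0
    · have h1 : μ S = 0 := measure_mono_null (fun ω h => h.2.1) hc
      have h2 : μ (C ∩ F) = 0 := measure_mono_null Set.inter_subset_left hc
      rw [h1, h2, mul_zero]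
    · have hcne : μ C ≠ ∞ := measure_ne_top _ _
      have hUY : μ (C ∩ Y) = μ C * μ Y :=
        heeU.measure_inter_preimage_eq_mul {(1:ℝ)} {(1:ℝ)}
          (measurableSet_singleton 1) (measurableSet_singleton 1)
      have hFY : (μ[|C]) (F ∩ Y) = (μ[|C]) F * (μ[|C]) Y :=
        heeC.measure_inter_preimage_eq_mul {(0:ℝ)} {(1:ℝ)}
          (measurableSet_singleton 0) (measurableSet_singleton 1)
      rw [cond_apply mC, cond_apply mC, cond_apply mC] at hFY
      have hCY' : (μ C)⁻¹ * μ (C ∩ Y) = μ Y := by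
        rw [hUY, ← mul_assoc, ENNReal.inv_mul_cancel hc hcne, one_mul]
      rw [hCY'] at hFY
      have hkey : μ (C ∩ (F ∩ Y)) = μ (C ∩ F) * μ Y := by
        have h2 : (μ C)⁻¹ * μ (C ∩ (F ∩ Y)) = (μ C)⁻¹ * (μ (C ∩ F) * μ Y) := by
          rw [hFY, mul_assoc]
        exact (ENNReal.mul_right_inj (ENNReal.inv_ne_zero.mpr hcne)
          (ENNReal.inv_ne_top.mpr hc)).mp h2
      have hset : S = C ∩ (F ∩ Y) := by
        ext ω; simp [hSdef]; tauto
      rw [hset, hkey, mul_comm]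
  -- the integral of Y2a
  have hInt : (∫ ω, Y2a ω ∂μ) = (μ Y).toReal := by
    have hfun : Y2a = Y.indicator (1 : Ω → ℝ) := by
      funext ω
      rcases hY2ar ω with h | h
      · have hn : ω ∉ Y := by simp [hYdef, h]
        simp [Set.indicator_apply, hn, h]
      · have hy : ω ∈ Y := h
        simp [Set.indicator_apply, hy, h]
    rw [hfun, integral_indicator_one mY]
    rfl
  -- combine
  have hset2 : {ω | E2a ω = 1 ∧ E1a ω = 0} = C ∩ F := by
    ext ω; simp [hCdef, hFdef]
  have hAtne : (μ sA).toReal ≠ 0 := ENNReal.toReal_ne_zero.mpr ⟨hposA, hAne⟩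
  rw [hLHS, hCmul, hD, hInt, hset2, ENNReal.toReal_mul, ENNReal.toReal_mul,
    ← mul_assoc, inv_mul_cancel₀ hAtne, one_mul]

/-- Decomposition of second-interval incidence among the time-1 unexposed. -/
theorem second_interval_incidence_unexposed
    {Ω : Type*} [MeasurableSpace Ω] (μ : Measure Ω) [IsProbabilityMeasure μ]
    (A E1 E2 DY1 DY2 : Ω → ℝ)
    (E1p : ℝ → Ω → ℝ) (E2p Y1p Y2p Wp : ℝ → ℝ → Ω → ℝ)
    (hAm : Measurable A) (hE1m : Measurable E1) (hE2m : Measurable E2)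
    (hDY1m : Measurable DY1) (hDY2m : Measurable DY2)
    (hE1pm : ∀ a ∈ ({0, 1} : Set ℝ), Measurable (E1p a))
    (hE2pm : ∀ a ∈ ({0, 1} : Set ℝ), ∀ e1 ∈ ({0, 1} : Set ℝ), Measurable (E2p a e1))
    (hY1pm : ∀ a ∈ ({0, 1} : Set ℝ), ∀ e1 ∈ ({0, 1} : Set ℝ), Measurable (Y1p a e1))
    (hY2pm : ∀ a ∈ ({0, 1} : Set ℝ), ∀ e2 ∈ ({0, 1} : Set ℝ), Measurable (Y2p a e2))
    (hWpm : ∀ a ∈ ({0, 1} : Set ℝ), ∀ e1 ∈ ({0, 1} : Set ℝ), Measurable (Wp a e1))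
    (hAr : ∀ ω, A ω = 0 ∨ A ω = 1) (hE1r : ∀ ω, E1 ω = 0 ∨ E1 ω = 1)
    (hE2r : ∀ ω, E2 ω = 0 ∨ E2 ω = 1)
    (hDY1r : ∀ ω, DY1 ω = 0 ∨ DY1 ω = 1) (hDY2r : ∀ ω, DY2 ω = 0 ∨ DY2 ω = 1)
    (hE1pr : ∀ a ∈ ({0, 1} : Set ℝ), ∀ ω, E1p a ω = 0 ∨ E1p a ω = 1)
    (hE2pr : ∀ a ∈ ({0, 1} : Set ℝ), ∀ e1 ∈ ({0, 1} : Set ℝ), ∀ ω,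
      E2p a e1 ω = 0 ∨ E2p a e1 ω = 1)
    (hY1pr : ∀ a ∈ ({0, 1} : Set ℝ), ∀ e1 ∈ ({0, 1} : Set ℝ), ∀ ω,
      Y1p a e1 ω = 0 ∨ Y1p a e1 ω = 1)
    (hY2pr : ∀ a ∈ ({0, 1} : Set ℝ), ∀ e2 ∈ ({0, 1} : Set ℝ), ∀ ω,
      Y2p a e2 ω = 0 ∨ Y2p a e2 ω = 1)
    (hWpr : ∀ a ∈ ({0, 1} : Set ℝ), ∀ e1 ∈ ({0, 1} : Set ℝ), ∀ ω,
      Wp a e1 ω = 0 ∨ Wp a e1 ω = 1)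
    (hmono : ∀ ω, DY1 ω = 1 → DY2 ω = 0)
    -- Consistency
    (hconsE1 : ∀ a ∈ ({0, 1} : Set ℝ), ∀ᵐ ω ∂μ, A ω = a → E1 ω = E1p a ω)
    (hconsY1 : ∀ a ∈ ({0, 1} : Set ℝ), ∀ e1 ∈ ({0, 1} : Set ℝ),
      ∀ᵐ ω ∂μ, A ω = a → E1 ω = e1 → DY1 ω = Y1p a e1 ω)
    (hconsE2 : ∀ a ∈ ({0, 1} : Set ℝ), ∀ e1 ∈ ({0, 1} : Set ℝ),
      ∀ᵐ ω ∂μ, A ω = a → E1 ω = e1 → E2 ω = E2p a e1 ω)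
    (hconsY2 : ∀ a ∈ ({0, 1} : Set ℝ), ∀ e2 ∈ ({0, 1} : Set ℝ),
      ∀ᵐ ω ∂μ, A ω = a → E1 ω = 0 → E2 ω = e2 → DY2 ω = Y2p a e2 ω)
    (hconsW : ∀ a ∈ ({0, 1} : Set ℝ), ∀ e1 ∈ ({0, 1} : Set ℝ),
      ∀ᵐ ω ∂μ, A ω = a → E1 ω = e1 → DY1 ω = 0 → E2 ω = 1 → DY2 ω = Wp a e1 ω)
    -- Exposure necessity
    (hnecY1 : ∀ a ∈ ({0, 1} : Set ℝ), ∀ᵐ ω ∂μ, Y1p a 0 ω = 0)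
    (hnecY2 : ∀ a ∈ ({0, 1} : Set ℝ), ∀ᵐ ω ∂μ, Y2p a 0 ω = 0)
    (hnecE2 : ∀ᵐ ω ∂μ, E2 ω = 0 → DY2 ω = 0)
    -- Treatment exchangeability
    (hexch : IndepFun A (fun ω => ![E1p 0 ω, E1p 1 ω,
      E2p 0 0 ω, E2p 0 1 ω, E2p 1 0 ω, E2p 1 1 ω,
      Y1p 0 0 ω, Y1p 0 1 ω, Y1p 1 0 ω, Y1p 1 1 ω,
      Y2p 0 0 ω, Y2p 0 1 ω, Y2p 1 0 ω, Y2p 1 1 ω,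
      Wp 0 0 ω, Wp 0 1 ω, Wp 1 0 ω, Wp 1 1 ω]) μ)
    -- Positivity
    (hpos : 0 < (μ {ω | A ω = 1}).toReal ∧ (μ {ω | A ω = 1}).toReal < 1)
    -- Exposure exchangeability
    (heeY1 : ∀ a ∈ ({0, 1} : Set ℝ), ∀ e1 ∈ ({0, 1} : Set ℝ), IndepFun (E1p a) (Y1p a e1) μ)
    (heeY2cond : ∀ a ∈ ({0, 1} : Set ℝ), ∀ e2 ∈ ({0, 1} : Set ℝ), ∀ e ∈ ({0, 1} : Set ℝ),
      IndepFun (E1p a) (Y2p a e2) (μ[|{ω | E2p a 0 ω = e}]))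
    (heeE2 : ∀ a ∈ ({0, 1} : Set ℝ), ∀ e2 ∈ ({0, 1} : Set ℝ), IndepFun (E2p a 0) (Y2p a e2) μ)
    :
    ∀ a ∈ ({0, 1} : Set ℝ),
      (∫ ω in {ω | E1 ω = 0}, DY2 ω ∂(μ[|{ω | A ω = a}])) =
        (∫ ω, Y2p a 1 ω ∂μ) * (μ {ω | E2p a 0 ω = 1 ∧ E1p a ω = 0}).toReal := by
  intro a ha
  have h0 : (0:ℝ) ∈ ({0,1} : Set ℝ) := by norm_num
  have h1 : (1:ℝ) ∈ ({0,1} : Set ℝ) := by norm_num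
  have msA1 : MeasurableSet {ω | A ω = 1} := hAm (measurableSet_singleton 1)
  have hA1ne : μ {ω | A ω = 1} ≠ 0 := by
    intro h; rw [h] at hpos; simp at hpos
  have hA1lt : μ {ω | A ω = 1} ≠ 1 := by
    intro h; rw [h] at hpos; simp at hpos
  have hA0ne : μ {ω | A ω = 0} ≠ 0 := by
    have hcomp : {ω | A ω = 0} = {ω | A ω = 1}ᶜ := by
      ext ω; rcases hAr ω with h | h <;> simp [h]
    rw [hcomp, measure_compl msA1 (measure_ne_top _ _), measure_univ]
    intro h
    exact hA1lt (le_antisymm prob_le_one (tsub_eq_zero_iff_le.mp h))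
  rw [Set.mem_insert_iff, Set.mem_singleton_iff] at ha
  rcases ha with rfl | rfl
  · have hψ : Measurable (fun v : Fin 18 → ℝ => (v 0, v 2, v 11)) :=
      (measurable_pi_apply 0).prodMk ((measurable_pi_apply 2).prodMk (measurable_pi_apply 11))
    have hindep : IndepFun A (fun ω => (E1p 0 ω, E2p 0 0 ω, Y2p 0 1 ω)) μ :=
      hexch.comp measurable_id hψ
    exact siiu_aux μ A E1 E2 DY2 (E1p 0) (E2p 0 0) (Y2p 0 1) 0 hAm hE1m
      (hE1pm 0 h0) (hE2pm 0 h0 0 h0) (hY2pm 0 h0 1 h1) hE1r hE2r (hY2pr 0 h0 1 h1)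
      (hconsE1 0 h0) (hconsE2 0 h0 0 h0) (hconsY2 0 h0 1 h1) hnecE2 hindep hA0ne
      (heeY2cond 0 h0 1 h1 1 h1) (heeE2 0 h0 1 h1)
  · have hψ : Measurable (fun v : Fin 18 → ℝ => (v 1, v 4, v 13)) :=
      (measurable_pi_apply 1).prodMk ((measurable_pi_apply 4).prodMk (measurable_pi_apply 13))
    have hindep : IndepFun A (fun ω => (E1p 1 ω, E2p 1 0 ω, Y2p 1 1 ω)) μ :=
      hexch.comp measurable_id hψ
    exact siiu_aux μ A E1 E2 DY2 (E1p 1) (E2p 1 0) (Y2p 1 1) 1 hAm hE1m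
      (hE1pm 1 h1) (hE2pm 1 h1 0 h0) (hY2pm 1 h1 1 h1) hE1r hE2r (hY2pr 1 h1 1 h1)
      (hconsE1 1 h1) (hconsE2 1 h1 0 h0) (hconsY2 1 h1 1 h1) hnecE2 hindep hA1ne
      (heeY2cond 1 h1 1 h1 1 h1) (heeE2 1 h1 1 h1)
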